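/- Let φ : ℂ^{k−1} × ℂ → ℂᵏ be holomorphic, α > 0 real, and suppose for a dense set Σ ⊆ ℂ^{k−1} of parameters u there exist α(u) ∈ ℝ₊, ν₁(u), ν₂(u) ∈ ℂᵏ with φ(u, z_k) = exp(2πi z_k/α(u))·ν₁(u) + ν₂(u) for all z_k ∈ ℂ. Assume further that ν₂(u) takes values in a fixed compact subset of ℂᵏ whenever defined, and that the assignment u ↦ (exp(1/α(u)), ν₁(u), ν₂(u)) extends holomorphically (determined by φ(u,0), φ(u,1), φ(u,−1)). Then α(u) ≡ α is constant, ν₁, ν₂ extend to holomorphic maps on ℂ^{k−1}, φ(u, z_k) = ν₁(u)exp(2πi z_k/α) + ν₂(u) for all u, and ν₂ is constant. -/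

import Mathlib

open Bornology Set

lemma line_liouville {m : ℕ} {F : Type*} [NormedAddCommGroup F] [NormedSpace ℂ F]
    {f : (Fin m → ℂ) → F} (hf : Differentiable ℂ f)
    (hb : IsBounded (Set.range f)) (u v : Fin m → ℂ) : f u = f v := by
  have hg : Differentiable ℂ (fun t : ℂ => f (u + t • (v - u))) :=
    hf.comp ((differentiable_const u).add (differentiable_fun_id.smul_const (v - u)))
  have hbg : IsBounded (Set.range fun t : ℂ => f (u + t • (v - u))) :=
    hb.subset (by rintro _ ⟨t, rfl⟩; exact ⟨_, rfl⟩)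
  have h := hg.apply_eq_apply_of_bounded hbg 0 1
  simpa [add_sub_cancel] using h

lemma dense_mapsto {X Y : Type*} [TopologicalSpace X] [TopologicalSpace Y]
    {f : X → Y} (hf : Continuous f) {S : Set X} (hS : Dense S)
    {T : Set Y} (hT : IsClosed T) (h : ∀ u ∈ S, f u ∈ T) (x : X) : f x ∈ T :=
  closure_minimal h (hT.preimage hf) (hS x)

/-- Proposition 4.5: If a holomorphic map
`φ : ℂ^{k−1} × ℂ → ℂᵏ` has, for a dense set `Σ` of parameters `u`, the form
`φ(u, z_k) = exp(2πi z_k/α(u))·ν₁(u) + ν₂(u)` with `α(u) > 0`, `ν₂(u)` in a fixed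
compact set, and the data `u ↦ (exp(1/α(u)), ν₁(u), ν₂(u))` extends
holomorphically, then `α` is a constant `α`, `ν₁` extends holomorphically, the
formula holds for all `u`, and `ν₂` is constant. -/
theorem stmt_19 (m k : ℕ)
    (φ : (Fin m → ℂ) × ℂ → (Fin k → ℂ)) (hφ : Differentiable ℂ φ)
    (S : Set (Fin m → ℂ)) (hdense : Dense S)
    (Kc : Set (Fin k → ℂ)) (hKc : IsCompact Kc)
    (α : (Fin m → ℂ) → ℝ) (ν₁ ν₂ : (Fin m → ℂ) → (Fin k → ℂ))
    (hrep : ∀ u ∈ S, 0 < α u ∧ ν₂ u ∈ Kc ∧ ∀ ζ : ℂ,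
      φ (u, ζ) = Complex.exp (2 * (Real.pi : ℂ) * Complex.I * ζ / (α u : ℂ)) • ν₁ u + ν₂ u)
    (hext : ∃ (e : (Fin m → ℂ) → ℂ) (N₁ N₂ : (Fin m → ℂ) → (Fin k → ℂ)),
      Differentiable ℂ e ∧ Differentiable ℂ N₁ ∧ Differentiable ℂ N₂ ∧
      ∀ u ∈ S, e u = Complex.exp (1 / (α u : ℂ)) ∧ N₁ u = ν₁ u ∧ N₂ u = ν₂ u) :
    ∃ αc : ℝ, 0 < αc ∧ (∀ u ∈ S, α u = αc) ∧
      ∃ (M₁ : (Fin m → ℂ) → (Fin k → ℂ)) (c₂ : Fin k → ℂ),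
        Differentiable ℂ M₁ ∧ (∀ u ∈ S, M₁ u = ν₁ u) ∧ c₂ ∈ Kc ∧
        ∀ (u : Fin m → ℂ) (ζ : ℂ),
          φ (u, ζ) = Complex.exp (2 * (Real.pi : ℂ) * Complex.I * ζ / (αc : ℂ)) • M₁ u + c₂ := by
  obtain ⟨e, N₁, N₂, he, hN₁, hN₂, hagree⟩ := hext
  -- S is nonempty
  obtain ⟨u₀, hu₀⟩ := hdense.nonempty
  -- e u is a real number ≥ 1 on S
  have heval : ∀ u ∈ S, e u = ((Real.exp (α u)⁻¹ : ℝ) : ℂ) := by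
    intro u hu
    rw [(hagree u hu).1, Complex.ofReal_exp, one_div, ← Complex.ofReal_inv]
  -- e maps everything into the closed set {z | z.im = 0 ∧ 1 ≤ z.re}
  have hT : IsClosed {z : ℂ | z.im = 0 ∧ 1 ≤ z.re} :=
    IsClosed.inter (isClosed_eq Complex.continuous_im continuous_const)
      (isClosed_le continuous_const Complex.continuous_re)
  have hemem : ∀ x, e x ∈ {z : ℂ | z.im = 0 ∧ 1 ≤ z.re} := by
    refine dense_mapsto he.continuous hdense hT ?_
    intro u hu
    rw [heval u hu]
    refine ⟨Complex.ofReal_im _, ?_⟩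
    rw [Complex.ofReal_re]
    have := (hrep u hu).1
    have h1 : (0:ℝ) ≤ (α u)⁻¹ := le_of_lt (by positivity)
    calc (1:ℝ) = Real.exp 0 := by simp
      _ ≤ Real.exp (α u)⁻¹ := Real.exp_le_exp.mpr h1
  have hene : ∀ x, e x ≠ 0 := by
    intro x hx
    have := (hemem x).2
    rw [hx] at this
    simp at this
    linarith
  -- e⁻¹ is entire and bounded, hence constant; so e is constant
  have hinv : Differentiable ℂ (fun x => (e x)⁻¹) := he.inv hene
  have hbd : IsBounded (Set.range fun x => (e x)⁻¹) := by
    apply (Metric.isBounded_closedBall (x := (0:ℂ)) (r := 1)).subset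
    rintro _ ⟨x, rfl⟩
    have h1 : (1:ℝ) ≤ ‖e x‖ := le_trans (hemem x).2 (Complex.re_le_norm _)
    simp only [Metric.mem_closedBall, dist_zero_right, norm_inv]
    exact inv_le_one_of_one_le₀ h1
  have hconst : ∀ x y, e x = e y := fun x y =>
    inv_injective (line_liouville hinv hbd x y)
  -- hence α is constant on S
  have hαconst : ∀ u ∈ S, α u = α u₀ := by
    intro u hu
    have h1 : ((Real.exp (α u)⁻¹ : ℝ) : ℂ) = ((Real.exp (α u₀)⁻¹ : ℝ) : ℂ) := by
      rw [← heval u hu, ← heval u₀ hu₀, hconst u u₀]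
    have h2 : Real.exp (α u)⁻¹ = Real.exp (α u₀)⁻¹ := Complex.ofReal_injective h1
    have h3 : (α u)⁻¹ = (α u₀)⁻¹ := Real.exp_injective h2
    exact inv_injective h3
  -- N₂ maps into Kc everywhere, hence bounded, hence constant
  have hN₂mem : ∀ x, N₂ x ∈ Kc := by
    refine dense_mapsto hN₂.continuous hdense hKc.isClosed ?_
    intro u hu
    rw [(hagree u hu).2.2]
    exact (hrep u hu).2.1
  have hN₂bd : IsBounded (Set.range N₂) :=
    hKc.isBounded.subset (by rintro _ ⟨x, rfl⟩; exact hN₂mem x)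
  have hN₂const : ∀ x, N₂ x = N₂ u₀ := fun x => line_liouville hN₂ hN₂bd x u₀
  refine ⟨α u₀, (hrep u₀ hu₀).1, hαconst, N₁, N₂ u₀, hN₁, fun u hu => (hagree u hu).2.1,
    hN₂mem u₀, ?_⟩
  -- the formula for all u, by density in u for each fixed ζ
  intro u ζ
  have key : (fun u => φ (u, ζ)) =
      (fun u => Complex.exp (2 * (Real.pi : ℂ) * Complex.I * ζ / ((α u₀ : ℝ) : ℂ)) • N₁ u
        + N₂ u₀) := by
    apply Continuous.ext_on hdense
    · exact hφ.continuous.comp (continuous_id.prodMk continuous_const)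
    · have hc := hN₁.continuous
      fun_prop
    · intro v hv
      have h1 := (hrep v hv).2.2 ζ
      show φ (v, ζ) = Complex.exp (2 * (Real.pi : ℂ) * Complex.I * ζ / ((α u₀ : ℝ) : ℂ)) • N₁ v
        + N₂ u₀
      rw [h1, hαconst v hv, (hagree v hv).2.1, ← hN₂const v, (hagree v hv).2.2]
  exact congrFun key u
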